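/- Let ψ₀(x̄) = ∑_{k̄} C(k̄) Λ_{j=1}^{N̄} e^{i k_j x_j} be a finite linear combination of antisymmetrized exponentials on T^{N̄} (each k̄ = {k_1,…,k_{N̄}} a set of distinct vectors in (2π/N)ℤ³), normalized so that ∫_{T^{N̄}} |ψ₀(x̄)|² dx̄ = Z. If any two distinct multi-indices k̄ ≠ k̄' appearing in the sum differ in at least two elements (#(k̄ \ k̄') ≥ 2), then the one-particle density ρᵉ(x) := −e ∫ ∑_{j=1}^{N̄} δ(x−x_j) |ψ₀(x̄)|² dx̄ is constant: ρᵉ(x) ≡ −eZ for all x ∈ T. -/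

import Mathlib

open MeasureTheory Complex Finset

/-- Fundamental domain `[0,N)^{3M}` of the configuration space `T^M`, `T = ℝ³/Nℤ³`. -/
noncomputable def cfgBox (M N : ℕ) : Set (Fin M → Fin 3 → ℝ) :=
  Set.univ.pi fun _ => Set.univ.pi fun _ => Set.Ico (0 : ℝ) (N : ℝ)

/-- Antisymmetrized (Slater) product of plane waves `Λ_{j} e^{i k_j·x_j}`
with wave vectors `k : Fin M → (Fin 3 → ℝ)`. -/
noncomputable def slater (M : ℕ) (k : Fin M → Fin 3 → ℝ) (x : Fin M → Fin 3 → ℝ) : ℂ :=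
  (Real.sqrt (Nat.factorial M) : ℂ)⁻¹ *
    ∑ π : Equiv.Perm (Fin M), (Equiv.Perm.sign π : ℤ) *
      ∏ j, Complex.exp (Complex.I * (∑ i, k j i * x (π j) i : ℝ))

/-- Lattice wave vector `(2π/N)·k` for `k ∈ ℤ³`. -/
noncomputable def waveVec (N : ℕ) (k : Fin 3 → ℤ) : Fin 3 → ℝ :=
  fun i => 2 * Real.pi / (N : ℝ) * (k i : ℝ)

/-- One-particle charge density `ρᵉ(x) = −e ∑_j ∫ |ψ(x̄)|²|_{x_j = x} dx̄'`
(the integral over the remaining `M−1` variables is realized by integrating over all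
`M` variables and dividing by the volume `N³` of the overwritten one). -/
noncomputable def oneParticleDensity (M N : ℕ) (e : ℝ) (ψ : (Fin M → Fin 3 → ℝ) → ℂ)
    (x : Fin 3 → ℝ) : ℝ :=
  -e * ∑ j : Fin M,
    (∫ y in cfgBox M N, ‖ψ (Function.update y j x)‖ ^ 2) / (N : ℝ) ^ 3

/-! ### Auxiliary machinery -/

/-- The one-particle fundamental domain `[0,N)³`. -/
noncomputable def box3 (N : ℕ) : Set (Fin 3 → ℝ) := Set.univ.pi fun _ => Set.Ico (0 : ℝ) (N : ℝ)

/-- Plane-wave phase factor `e^{i(2π/N) m·v}`. -/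
noncomputable def ph (N : ℕ) (m : Fin 3 → ℤ) (v : Fin 3 → ℝ) : ℂ :=
  Complex.exp (Complex.I * ((∑ i, 2 * Real.pi / N * (m i) * v i : ℝ) : ℂ))

lemma ph_zero (N : ℕ) (v : Fin 3 → ℝ) : ph N 0 v = 1 := by
  simp [ph]

lemma norm_ph (N : ℕ) (m : Fin 3 → ℤ) (v : Fin 3 → ℝ) : ‖ph N m v‖ = 1 := by
  rw [ph]
  rw [Complex.norm_exp]
  simp

lemma continuous_ph (N : ℕ) (m : Fin 3 → ℤ) : Continuous (ph N m) := by
  apply Complex.continuous_exp.comp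
  apply Continuous.mul continuous_const
  apply Complex.continuous_ofReal.comp
  exact continuous_finset_sum _ fun i _ => continuous_const.mul (continuous_apply i)

lemma int1d (N : ℕ) (hN : 0 < N) (m : ℤ) :
    ∫ t in Set.Ico (0:ℝ) (N:ℝ), Complex.exp ((Complex.I * (2 * Real.pi / N * m)) * t) =
      if m = 0 then (N:ℂ) else 0 := by
  have hNR : (0:ℝ) ≤ (N:ℝ) := by positivity
  rw [MeasureTheory.setIntegral_congr_set MeasureTheory.Ico_ae_eq_Ioc,
    ← intervalIntegral.integral_of_le hNR]
  by_cases hm : m = 0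
  · simp [hm]
  · have hc : Complex.I * (2 * Real.pi / N * m) ≠ 0 := by
      apply mul_ne_zero Complex.I_ne_zero
      have : (2 * Real.pi / N * m : ℝ) ≠ 0 := by
        apply mul_ne_zero
        · positivity
        · exact_mod_cast hm
      exact_mod_cast Complex.ofReal_ne_zero.mpr this
    rw [integral_exp_mul_complex hc]
    have h1 : Complex.I * (2 * Real.pi / N * m) * (N:ℝ) = (m : ℂ) * (2 * Real.pi * Complex.I) := by
      have hN0 : (N:ℂ) ≠ 0 := by exact_mod_cast Nat.cast_ne_zero.mpr hN.ne'
      push_cast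
      field_simp
    rw [h1, Complex.exp_int_mul_two_pi_mul_I]
    simp [hm]

lemma indicator_pi_prod {ι : Type*} [Fintype ι] {α : ι → Type*} (s : ∀ i, Set (α i))
    (f : ∀ i, α i → ℂ) (y : ∀ i, α i) :
    (Set.pi Set.univ s).indicator (fun y => ∏ i, f i (y i)) y
      = ∏ i, (s i).indicator (f i) (y i) := by
  by_cases hy : y ∈ Set.pi Set.univ s
  · rw [Set.indicator_of_mem hy]
    exact Finset.prod_congr rfl fun i _ =>
      (Set.indicator_of_mem (hy i (Set.mem_univ i)) (f i)).symm
  · rw [Set.indicator_of_notMem hy]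
    rw [Set.mem_univ_pi] at hy
    push_neg at hy
    obtain ⟨i, hi⟩ := hy
    exact (Finset.prod_eq_zero (Finset.mem_univ i)
      (Set.indicator_of_notMem hi (f i))).symm

lemma pi_set_integral {ι : Type*} [Fintype ι] {α : ι → Type*} [∀ i, MeasureSpace (α i)]
    [∀ i, SigmaFinite (volume : Measure (α i))] (s : ∀ i, Set (α i))
    (hs : ∀ i, MeasurableSet (s i)) (f : ∀ i, α i → ℂ) :
    ∫ y in Set.pi Set.univ s, ∏ i, f i (y i) = ∏ i, ∫ v in s i, f i v := by
  rw [← integral_indicator (MeasurableSet.univ_pi hs)]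
  simp_rw [indicator_pi_prod s f]
  rw [volume_pi, MeasureTheory.integral_fintype_prod_eq_prod (fun i => (s i).indicator (f i))]
  exact Finset.prod_congr rfl fun i _ => integral_indicator (hs i)

lemma int3d (N : ℕ) (hN : 0 < N) (m : Fin 3 → ℤ) :
    ∫ v in box3 N, ph N m v = if m = 0 then ((N:ℂ))^3 else 0 := by
  have hsplit : ∀ v : Fin 3 → ℝ, ph N m v
      = ∏ i, Complex.exp ((Complex.I * (2 * Real.pi / N * m i)) * (v i)) := by
    intro v
    rw [ph, ← Complex.exp_sum]
    congr 1
    push_cast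
    rw [Finset.mul_sum]
    exact Finset.sum_congr rfl fun i _ => by ring
  simp_rw [hsplit]
  rw [box3, pi_set_integral (fun _ => Set.Ico (0:ℝ) (N:ℝ))
    (fun _ => measurableSet_Ico)
    (fun i t => Complex.exp ((Complex.I * (2 * Real.pi / N * m i)) * t))]
  simp_rw [int1d N hN]
  by_cases hm : m = 0
  · simp [hm]
  · rw [if_neg hm]
    have : ∃ i, m i ≠ 0 := by
      by_contra h
      push_neg at h
      exact hm (funext h)
    obtain ⟨i, hi⟩ := this
    exact Finset.prod_eq_zero (Finset.mem_univ i) (by rw [if_neg hi])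

lemma cfg_integral (M N : ℕ) (f : Fin M → (Fin 3 → ℝ) → ℂ) :
    ∫ y in cfgBox M N, ∏ l, f l (y l) = ∏ l, ∫ v in box3 N, f l v := by
  have : cfgBox M N = Set.pi Set.univ fun _ : Fin M => box3 N := rfl
  rw [this]
  exact pi_set_integral _ (fun _ => MeasurableSet.univ_pi fun _ => measurableSet_Ico) f

lemma exp_mul_conj (a b : ℝ) :
    Complex.exp (Complex.I * a) * (starRingEnd ℂ) (Complex.exp (Complex.I * b))
      = Complex.exp (Complex.I * ((a - b : ℝ) : ℂ)) := by
  rw [← Complex.exp_conj, ← Complex.exp_add]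
  congr 1
  simp [Complex.conj_ofReal]
  ring

lemma prod_ph (M N : ℕ) (k k' : Fin M → Fin 3 → ℤ) (π σ : Equiv.Perm (Fin M))
    (z : Fin M → Fin 3 → ℝ) :
    (∏ j, Complex.exp (Complex.I * (∑ i, waveVec N (k j) i * z (π j) i : ℝ))) *
      (starRingEnd ℂ) (∏ j, Complex.exp (Complex.I * (∑ i, waveVec N (k' j) i * z (σ j) i : ℝ)))
      = ∏ l, ph N (k (π.symm l) - k' (σ.symm l)) (z l) := by
  have h1 : (∏ j, Complex.exp (Complex.I * (∑ i, waveVec N (k j) i * z (π j) i : ℝ)))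
      = ∏ l, Complex.exp (Complex.I * (∑ i, waveVec N (k (π.symm l)) i * z l i : ℝ)) := by
    rw [← Equiv.prod_comp π
      (fun l => Complex.exp (Complex.I * (∑ i, waveVec N (k (π.symm l)) i * z l i : ℝ)))]
    simp
  have h2 : (∏ j, Complex.exp (Complex.I * (∑ i, waveVec N (k' j) i * z (σ j) i : ℝ)))
      = ∏ l, Complex.exp (Complex.I * (∑ i, waveVec N (k' (σ.symm l)) i * z l i : ℝ)) := by
    rw [← Equiv.prod_comp σ
      (fun l => Complex.exp (Complex.I * (∑ i, waveVec N (k' (σ.symm l)) i * z l i : ℝ)))]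
    simp
  rw [h1, h2, map_prod, ← Finset.prod_mul_distrib]
  refine Finset.prod_congr rfl fun l _ => ?_
  have harg : (∑ i, waveVec N (k (π.symm l)) i * z l i)
        - (∑ i, waveVec N (k' (σ.symm l)) i * z l i)
      = ∑ i, 2 * Real.pi / N * (((k (π.symm l) - k' (σ.symm l)) i : ℤ) : ℝ) * z l i := by
    rw [← Finset.sum_sub_distrib]
    refine Finset.sum_congr rfl fun i _ => ?_
    simp only [waveVec, Pi.sub_apply]
    push_cast
    ring
  rw [exp_mul_conj, ph, harg]

lemma expand (M N : ℕ) (K : Finset (Fin M → Fin 3 → ℤ)) (C : (Fin M → Fin 3 → ℤ) → ℂ)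
    (z : Fin M → Fin 3 → ℝ) :
    (∑ k ∈ K, C k * slater M (fun j => waveVec N (k j)) z) *
      (starRingEnd ℂ) (∑ k ∈ K, C k * slater M (fun j => waveVec N (k j)) z)
    = ∑ k ∈ K, ∑ k' ∈ K, ∑ π : Equiv.Perm (Fin M), ∑ σ : Equiv.Perm (Fin M),
        (C k * (starRingEnd ℂ) (C k') * ((M.factorial : ℂ))⁻¹ *
          ((Equiv.Perm.sign π : ℤ) : ℂ) * ((Equiv.Perm.sign σ : ℤ) : ℂ)) *
          ∏ l, ph N (k (π.symm l) - k' (σ.symm l)) (z l) := by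
  rw [map_sum, Finset.sum_mul_sum]
  refine Finset.sum_congr rfl fun k _ => Finset.sum_congr rfl fun k' _ => ?_
  simp only [slater, map_mul, map_sum, map_inv₀, Complex.conj_ofReal, map_intCast]
  have hc : ((Real.sqrt (Nat.factorial M) : ℂ))⁻¹ * ((Real.sqrt (Nat.factorial M) : ℂ))⁻¹
      = ((M.factorial : ℂ))⁻¹ := by
    rw [← mul_inv, ← Complex.ofReal_mul,
      Real.mul_self_sqrt (Nat.cast_nonneg _)]
    norm_num
  calc C k * ((Real.sqrt (Nat.factorial M) : ℂ)⁻¹ *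
          ∑ π : Equiv.Perm (Fin M), ((Equiv.Perm.sign π : ℤ) : ℂ) *
            ∏ j, Complex.exp (Complex.I * (∑ i, waveVec N (k j) i * z (π j) i : ℝ))) *
        ((starRingEnd ℂ) (C k') * ((Real.sqrt (Nat.factorial M) : ℂ)⁻¹ *
          ∑ σ : Equiv.Perm (Fin M), ((Equiv.Perm.sign σ : ℤ) : ℂ) *
            (starRingEnd ℂ)
              (∏ j, Complex.exp (Complex.I * (∑ i, waveVec N (k' j) i * z (σ j) i : ℝ)))))
      = (C k * (starRingEnd ℂ) (C k') * ((M.factorial : ℂ))⁻¹) *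
        ((∑ π : Equiv.Perm (Fin M), ((Equiv.Perm.sign π : ℤ) : ℂ) *
            ∏ j, Complex.exp (Complex.I * (∑ i, waveVec N (k j) i * z (π j) i : ℝ))) *
         (∑ σ : Equiv.Perm (Fin M), ((Equiv.Perm.sign σ : ℤ) : ℂ) *
            (starRingEnd ℂ)
              (∏ j, Complex.exp (Complex.I * (∑ i, waveVec N (k' j) i * z (σ j) i : ℝ))))) := by
        rw [← hc]; ring
    _ = _ := by
        rw [Finset.sum_mul_sum, Finset.mul_sum]
        refine Finset.sum_congr rfl fun π _ => ?_
        rw [Finset.mul_sum]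
        refine Finset.sum_congr rfl fun σ _ => ?_
        rw [← prod_ph M N k k' π σ z]
        ring

lemma perm_ext_off {M : ℕ} (π σ : Equiv.Perm (Fin M)) (j : Fin M)
    (h : ∀ l, l ≠ j → π.symm l = σ.symm l) : π = σ := by
  have hsymm : ∀ l, π.symm l = σ.symm l := by
    intro l
    by_cases hl : l = j
    · rw [hl]
      by_contra hne
      set l' := σ (π.symm j) with hl'
      have hl'j : l' ≠ j := by
        intro hc
        apply hne
        have := congrArg σ.symm hc
        simpa [hl'] using this
      have := h l' hl'j
      have h2 : π.symm l' = π.symm j := by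
        rw [this, hl', Equiv.symm_apply_apply]
      have := π.symm.injective h2
      exact hl'j this
    · exact h l hl
  have h2 : π.symm = σ.symm := Equiv.ext hsymm
  have : π.symm.symm = σ.symm.symm := by rw [h2]
  simpa using this

lemma vol_box3 (N : ℕ) : (volume (box3 N)).toReal = (N:ℝ)^3 := by
  rw [box3, volume_pi_pi]
  simp [Real.volume_Ico, ENNReal.toReal_pow, ENNReal.toReal_ofReal (Nat.cast_nonneg N)]

lemma key (M N : ℕ) (hN : 0 < N) (k k' : Fin M → Fin 3 → ℤ)
    (hk : Function.Injective k)
    (hdiff : k ≠ k' → 2 ≤ (Finset.image k Finset.univ \ Finset.image k' Finset.univ).card)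
    (π σ : Equiv.Perm (Fin M)) (j : Fin M) (x : Fin 3 → ℝ) :
    ∫ y in cfgBox M N, ∏ l, ph N (k (π.symm l) - k' (σ.symm l)) (Function.update y j x l)
      = ∫ y in cfgBox M N, ∏ l, ph N (k (π.symm l) - k' (σ.symm l)) (y l) := by
  set d : Fin M → Fin 3 → ℤ := fun l => k (π.symm l) - k' (σ.symm l) with hd
  have hupd : ∀ y : Fin M → Fin 3 → ℝ, (∏ l, ph N (d l) (Function.update y j x l))
      = ∏ l, (fun l v => if l = j then ph N (d j) x else ph N (d l) v) l (y l) := by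
    intro y
    refine Finset.prod_congr rfl fun l _ => ?_
    by_cases hl : l = j
    · subst hl; simp [Function.update_self]
    · simp [hl, Function.update_of_ne hl]
  change ∫ y in cfgBox M N, ∏ l, ph N (d l) (Function.update y j x l)
      = ∫ y in cfgBox M N, ∏ l, ph N (d l) (y l)
  simp_rw [hupd]
  have e1 := cfg_integral M N (fun l v => if l = j then ph N (d j) x else ph N (d l) v)
  have e2 := cfg_integral M N (fun l => ph N (d l))
  beta_reduce at e1 e2
  rw [e1, e2]
  have hfac : ∀ l, (∫ v in box3 N, (fun v => if l = j then ph N (d j) x else ph N (d l) v) v)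
      = if l = j then ((N:ℝ)^3 : ℝ) • ph N (d j) x
        else (if d l = 0 then ((N:ℂ))^3 else 0) := by
    intro l
    by_cases hl : l = j
    · simp only [hl, if_pos]
      rw [MeasureTheory.setIntegral_const, measureReal_def, vol_box3]
    · simp only [hl, if_neg, if_false]
      exact int3d N hN (d l)
  simp_rw [hfac, int3d N hN]
  by_cases hzero : ∀ l, d l = 0
  · have h1 : ∀ l : Fin M, (if l = j then ((N:ℝ)^3 : ℝ) • ph N (d j) x
        else (if d l = 0 then ((N:ℂ))^3 else 0)) = ((N:ℂ))^3 := by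
      intro l
      by_cases hl : l = j
      · rw [if_pos hl, hzero j, ph_zero]
        simp [Complex.real_smul]
      · rw [if_neg hl, if_pos (hzero l)]
    have h2 : ∀ l : Fin M, (if d l = 0 then ((N:ℂ))^3 else 0) = ((N:ℂ))^3 :=
      fun l => if_pos (hzero l)
    rw [Finset.prod_congr rfl fun l _ => h1 l, Finset.prod_congr rfl fun l _ => h2 l]
  · push_neg at hzero
    obtain ⟨l₀, hl₀⟩ := hzero
    have hex : ∃ l₁, l₁ ≠ j ∧ d l₁ ≠ 0 := by
      by_contra hcon
      push_neg at hcon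
      have hkk : k = k' := by
        by_contra hne
        have hsub : Finset.image k Finset.univ \ Finset.image k' Finset.univ
            ⊆ {k (π.symm j)} := by
          intro v hv
          rw [Finset.mem_sdiff] at hv
          obtain ⟨hv1, hv2⟩ := hv
          rw [Finset.mem_image] at hv1
          obtain ⟨a, -, ha⟩ := hv1
          by_cases hla : π a = j
          · rw [Finset.mem_singleton, ← ha, ← hla, Equiv.symm_apply_apply]
          · exfalso
            have hda := hcon (π a) hla
            rw [hd] at hda
            simp only [Equiv.symm_apply_apply] at hda
            have : k a = k' (σ.symm (π a)) := sub_eq_zero.mp hda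
            apply hv2
            rw [Finset.mem_image]
            exact ⟨σ.symm (π a), Finset.mem_univ _, by rw [← this, ha]⟩
        have hle := Finset.card_le_card hsub
        rw [Finset.card_singleton] at hle
        have := hdiff hne
        omega
      subst hkk
      have hps : π = σ := by
        apply perm_ext_off π σ j
        intro l hl
        have := hcon l hl
        rw [hd] at this
        exact hk (sub_eq_zero.mp this)
      apply hl₀
      simp [hd, hps]
    obtain ⟨l₁, hl₁j, hl₁⟩ := hex
    rw [Finset.prod_eq_zero (Finset.mem_univ l₁) (by rw [if_neg hl₁j, if_neg hl₁]),
      Finset.prod_eq_zero (Finset.mem_univ l₀) (by rw [if_neg hl₀])]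

lemma vol_cfg (M N : ℕ) : volume (cfgBox M N) < ⊤ := by
  rw [cfgBox, volume_pi_pi]
  refine ENNReal.prod_lt_top fun l _ => ?_
  rw [volume_pi_pi]
  refine ENNReal.prod_lt_top fun i _ => ?_
  simp [Real.volume_Ico]

lemma integrableOn_bounded {M N : ℕ} {f : (Fin M → Fin 3 → ℝ) → ℂ} (hf : Continuous f)
    {B : ℝ} (hb : ∀ y, ‖f y‖ ≤ B) : IntegrableOn f (cfgBox M N) :=
  Integrable.mono' (integrableOn_const (vol_cfg M N).ne)
    (hf.aestronglyMeasurable.restrict) (ae_of_all _ hb)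

lemma expandInt (M N : ℕ) (K : Finset (Fin M → Fin 3 → ℤ)) (C : (Fin M → Fin 3 → ℤ) → ℂ)
    (u : (Fin M → Fin 3 → ℝ) → (Fin M → Fin 3 → ℝ)) (hu : Continuous u) :
    ((∫ y in cfgBox M N, ‖(∑ k ∈ K, C k * slater M (fun j => waveVec N (k j)) (u y))‖^2 : ℝ) : ℂ)
    = ∑ k ∈ K, ∑ k' ∈ K, ∑ π : Equiv.Perm (Fin M), ∑ σ : Equiv.Perm (Fin M),
        (C k * (starRingEnd ℂ) (C k') * ((M.factorial : ℂ))⁻¹ *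
          ((Equiv.Perm.sign π : ℤ) : ℂ) * ((Equiv.Perm.sign σ : ℤ) : ℂ)) *
          ∫ y in cfgBox M N, ∏ l, ph N (k (π.symm l) - k' (σ.symm l)) (u y l) := by
  have hterm : ∀ (k k' : Fin M → Fin 3 → ℤ) (π σ : Equiv.Perm (Fin M)),
      IntegrableOn (fun y => ∏ l, ph N (k (π.symm l) - k' (σ.symm l)) (u y l)) (cfgBox M N) := by
    intro k k' π σ
    refine integrableOn_bounded ?_ (B := 1) ?_
    · exact continuous_finset_prod _ fun l _ =>
        (continuous_ph N _).comp ((continuous_apply l).comp hu)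
    · intro y
      rw [norm_prod]
      simp only [norm_ph, Finset.prod_const_one, le_refl]
  have hterm' : ∀ (k k' : Fin M → Fin 3 → ℤ) (π σ : Equiv.Perm (Fin M)),
      IntegrableOn (fun y =>
        (C k * (starRingEnd ℂ) (C k') * ((M.factorial : ℂ))⁻¹ *
          ((Equiv.Perm.sign π : ℤ) : ℂ) * ((Equiv.Perm.sign σ : ℤ) : ℂ)) *
          ∏ l, ph N (k (π.symm l) - k' (σ.symm l)) (u y l)) (cfgBox M N) := by
    intro k k' π σ
    exact (hterm k k' π σ).const_mul _
  rw [show ((∫ y in cfgBox M N,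
        ‖(∑ k ∈ K, C k * slater M (fun j => waveVec N (k j)) (u y))‖^2 : ℝ) : ℂ)
      = ∫ y in cfgBox M N,
        ((‖(∑ k ∈ K, C k * slater M (fun j => waveVec N (k j)) (u y))‖^2 : ℝ) : ℂ) from
    (integral_ofReal (𝕜 := ℂ)).symm]
  have hpt : ∀ y : Fin M → Fin 3 → ℝ,
      ((‖(∑ k ∈ K, C k * slater M (fun j => waveVec N (k j)) (u y))‖^2 : ℝ) : ℂ)
      = ∑ k ∈ K, ∑ k' ∈ K, ∑ π : Equiv.Perm (Fin M), ∑ σ : Equiv.Perm (Fin M),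
        (C k * (starRingEnd ℂ) (C k') * ((M.factorial : ℂ))⁻¹ *
          ((Equiv.Perm.sign π : ℤ) : ℂ) * ((Equiv.Perm.sign σ : ℤ) : ℂ)) *
          ∏ l, ph N (k (π.symm l) - k' (σ.symm l)) (u y l) := by
    intro y
    rw [← expand M N K C (u y)]
    rw [Complex.mul_conj]
    norm_cast
    simp [Complex.normSq_eq_norm_sq]
  simp_rw [hpt]
  rw [integral_finset_sum _ (fun k _ => integrable_finset_sum _ (fun k' _ =>
    integrable_finset_sum _ (fun π _ => integrable_finset_sum _ (fun σ _ => hterm' k k' π σ))))]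
  refine Finset.sum_congr rfl fun k _ => ?_
  rw [integral_finset_sum _ (fun k' _ =>
    integrable_finset_sum _ (fun π _ => integrable_finset_sum _ (fun σ _ => hterm' k k' π σ)))]
  refine Finset.sum_congr rfl fun k' _ => ?_
  rw [integral_finset_sum _ (fun π _ => integrable_finset_sum _ (fun σ _ => hterm' k k' π σ))]
  refine Finset.sum_congr rfl fun π _ => ?_
  rw [integral_finset_sum _ (fun σ _ => hterm' k k' π σ)]
  refine Finset.sum_congr rfl fun σ _ => ?_
  exact integral_const_mul _ _

/-- If `ψ₀ = ∑_{k̄} C(k̄) Λ_j e^{i k_j x_j}` is normalized in `L²(T^{N̄})` with total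
charge `Z`, each `k̄` consists of distinct wave vectors, distinct multi-indices represent
distinct sets, and any two distinct sets differ in at least two elements, then the
one-particle density is uniform: `ρᵉ(x) ≡ −eZ`. -/
theorem stmt_1 (N : ℕ) (hN : 0 < N) (e Z : ℝ)
    (K : Finset (Fin (N ^ 3) → Fin 3 → ℤ)) (C : (Fin (N ^ 3) → Fin 3 → ℤ) → ℂ)
    (hdist : ∀ k ∈ K, Function.Injective k)
    (hsets : ∀ k ∈ K, ∀ k' ∈ K, k ≠ k' →
      Finset.image k Finset.univ ≠ Finset.image k' Finset.univ)
    (hadr : ∀ k ∈ K, ∀ k' ∈ K, k ≠ k' →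
      2 ≤ (Finset.image k Finset.univ \ Finset.image k' Finset.univ).card)
    (ψ₀ : (Fin (N ^ 3) → Fin 3 → ℝ) → ℂ)
    (hψ₀ : ψ₀ = fun x => ∑ k ∈ K, C k * slater (N ^ 3) (fun j => waveVec N (k j)) x)
    (hnorm : ∫ x in cfgBox (N ^ 3) N, ‖ψ₀ x‖ ^ 2 = Z) :
    ∀ x : Fin 3 → ℝ, oneParticleDensity (N ^ 3) N e ψ₀ x = -e * Z := by
  intro x
  subst hψ₀
  have hkey : ∀ j : Fin (N ^ 3),
      (∫ y in cfgBox (N ^ 3) N,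
        ‖(∑ k ∈ K, C k * slater (N ^ 3) (fun j => waveVec N (k j))
          (Function.update y j x))‖ ^ 2) = Z := by
    intro j
    have h1 := expandInt (N ^ 3) N K C (fun y => Function.update y j x)
      (continuous_id.update j continuous_const)
    have h2 := expandInt (N ^ 3) N K C id continuous_id
    simp only [id_eq] at h2
    rw [hnorm] at h2
    have h4 : ((∫ y in cfgBox (N ^ 3) N,
        ‖(∑ k ∈ K, C k * slater (N ^ 3) (fun j => waveVec N (k j))
          (Function.update y j x))‖ ^ 2 : ℝ) : ℂ) = ((Z : ℝ) : ℂ) := by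
      rw [h1, h2]
      refine Finset.sum_congr rfl fun k hk => Finset.sum_congr rfl fun k' hk' =>
        Finset.sum_congr rfl fun π _ => Finset.sum_congr rfl fun σ _ => ?_
      congr 1
      exact key (N ^ 3) N hN k k' (hdist k hk) (fun hne => hadr k hk k' hk' hne) π σ j x
    exact_mod_cast h4
  rw [oneParticleDensity]
  rw [Finset.sum_congr rfl (fun j _ => by rw [hkey j])]
  rw [Finset.sum_const, Finset.card_univ, Fintype.card_fin, nsmul_eq_mul]
  have hN3 : ((N : ℝ)) ^ 3 ≠ 0 := by positivity
  push_cast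
  field_simp
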